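/- arXiv:2301.12501 — 2 statements merged into one kernel-verified Lean document; each statement's English description precedes it below -/
import Mathlib

section
/- Let α > 0 and c > 0 be real numbers and let g : ℝ → ℝ be differentiable at a point t with g(t) > 0. Then the function s ↦ E_α(−c · g(s)^α) is differentiable at t with derivative (d/dt) E_α(−c g(t)^α) = −c g'(t) g(t)^{α−1} E_{α,α}(−c g(t)^α). -/
/-- The one-parameter Mittag-Leffler function `E_α(x) = Σ_{k=0}^∞ x^k / Γ(α k + 1)`. -/
noncomputable def mittagLeffler (α : ℝ) (x : ℝ) : ℝ :=
  ∑' k : ℕ, x ^ k / Real.Gamma (α * k + 1)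

/-- The two-parameter Mittag-Leffler function `E_{α,β}(x) = Σ_{k=0}^∞ x^k / Γ(α k + β)`. -/
noncomputable def mittagLeffler2 (α β : ℝ) (x : ℝ) : ℝ :=
  ∑' k : ℕ, x ^ k / Real.Gamma (α * k + β)

open Real Filter Metric

/-- Lower bound for Gamma via log-convexity: `Γ(x)·(x-1)^α ≤ Γ(x+α)` for `x ≥ 2`, `α > 0`. -/
lemma gamma_lower {α x : ℝ} (hα : 0 < α) (hx : 2 ≤ x) :
    Real.Gamma x * (x - 1) ^ α ≤ Real.Gamma (x + α) := by
  have hx1 : (0:ℝ) < x - 1 := by linarith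
  have hxpos : (0:ℝ) < x := by linarith
  have h1 : (x - 1 : ℝ) ∈ Set.Ioi (0:ℝ) := hx1
  have h3 : (x + α : ℝ) ∈ Set.Ioi (0:ℝ) := by simp; linarith
  have hslope := Real.convexOn_log_Gamma.slope_mono_adjacent h1 h3
      (by linarith : x - 1 < x) (by linarith : x < x + α)
  simp only [Function.comp_apply] at hslope
  have hG1 : 0 < Real.Gamma (x - 1) := Real.Gamma_pos_of_pos hx1
  have hGx : 0 < Real.Gamma x := Real.Gamma_pos_of_pos hxpos
  have hGxa : 0 < Real.Gamma (x + α) := Real.Gamma_pos_of_pos (by linarith)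
  have hGamma : Real.Gamma x = (x - 1) * Real.Gamma (x - 1) := by
    have := Real.Gamma_add_one (ne_of_gt hx1)
    simpa using this
  have hLHS : (Real.log (Real.Gamma x) - Real.log (Real.Gamma (x - 1))) / (x - (x - 1))
      = Real.log (x - 1) := by
    rw [hGamma, Real.log_mul (ne_of_gt hx1) (ne_of_gt hG1)]
    ring
  rw [hLHS] at hslope
  rw [le_div_iff₀ (by linarith : (0:ℝ) < x + α - x)] at hslope
  have : Real.log (Real.Gamma x) + Real.log (x - 1) * α ≤ Real.log (Real.Gamma (x + α)) := by
    nlinarith [hslope]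
  calc Real.Gamma x * (x - 1) ^ α
      = Real.exp (Real.log (Real.Gamma x) + Real.log (x - 1) * α) := by
        rw [Real.exp_add, Real.exp_log hGx, Real.rpow_def_of_pos hx1]
    _ ≤ Real.exp (Real.log (Real.Gamma (x + α))) := Real.exp_le_exp.mpr this
    _ = Real.Gamma (x + α) := Real.exp_log hGxa

/-- Summability of the term-by-term derivative bound of the Mittag-Leffler series. -/
lemma summable_ml_deriv_bound (α : ℝ) (hα : 0 < α) (R : ℝ) (hR : 0 < R) :
    Summable (fun n : ℕ => (n : ℝ) * R ^ (n - 1) / Real.Gamma (α * n + 1)) := by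
  set u : ℕ → ℝ := fun n => (n : ℝ) * R ^ (n - 1) / Real.Gamma (α * n + 1) with hu
  have hGpos : ∀ n : ℕ, 0 < Real.Gamma (α * n + 1) := fun n =>
    Real.Gamma_pos_of_pos (by positivity)
  apply summable_of_ratio_norm_eventually_le (r := 1/2) (by norm_num)
  -- eventually: (αn)^α ≥ 4R, αn ≥ 1, n ≥ 1
  have h1 : Tendsto (fun n : ℕ => (α * n) ^ α) atTop atTop := by
    apply (tendsto_rpow_atTop hα).comp
    exact Tendsto.const_mul_atTop hα tendsto_natCast_atTop_atTop
  have h2 : ∀ᶠ n : ℕ in atTop, 8 * R ≤ (α * n) ^ α := h1.eventually_ge_atTop _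
  have h3 : ∀ᶠ n : ℕ in atTop, 1 ≤ α * n := by
    have : Tendsto (fun n : ℕ => α * n) atTop atTop :=
      Tendsto.const_mul_atTop hα tendsto_natCast_atTop_atTop
    exact this.eventually_ge_atTop _
  filter_upwards [h2, h3, eventually_ge_atTop 1] with n hn2 hn3 hn1
  have hnpos : 0 < (n : ℝ) := by exact_mod_cast hn1
  have hgam : Real.Gamma (α * n + 1) * (α * n) ^ α ≤ Real.Gamma ((α * n + 1) + α) := by
    have h := gamma_lower hα (show (2:ℝ) ≤ α * n + 1 by linarith)
    rwa [show α * (n:ℝ) + 1 - 1 = α * n by ring] at h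
  have harg : α * ((n : ℕ) + 1 : ℕ) + 1 = (α * n + 1) + α := by push_cast; ring
  have hGpos' : 0 < Real.Gamma ((α * n + 1) + α) := Real.Gamma_pos_of_pos (by positivity)
  have hGn : 0 < Real.Gamma (α * n + 1) := hGpos n
  have hRp : 0 < R ^ (n - 1) := pow_pos hR _
  have hRn : R ^ n = R * R ^ (n - 1) := by
    conv_lhs => rw [show n = 1 + (n - 1) by omega]
    rw [pow_add, pow_one]
  have hupos : 0 ≤ u n := by positivity
  have hun1 : u (n + 1) = ((n : ℝ) + 1) * R ^ n / Real.Gamma ((α * n + 1) + α) := by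
    rw [hu]
    push_cast [Nat.add_sub_cancel]
    rw [show α * ((n : ℝ) + 1) + 1 = (α * n + 1) + α by ring]
  rw [Real.norm_eq_abs, Real.norm_eq_abs, abs_of_nonneg (by positivity), abs_of_nonneg hupos,
    hun1, hu]
  have step1 : ((n : ℝ) + 1) * R ^ n / Real.Gamma ((α * n + 1) + α)
      ≤ ((n : ℝ) + 1) * R ^ n / (Real.Gamma (α * n + 1) * (α * n) ^ α) := by
    apply div_le_div_of_nonneg_left (by positivity) (by positivity) hgam
  refine step1.trans ?_
  rw [div_le_iff₀ (by positivity), hRn]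
  have key : ((n : ℝ) + 1) * R * 4 ≤ (n : ℝ) * (α * n) ^ α := by
    have hRa : (0:ℝ) < (α * n) ^ α := by positivity
    have h8R : 8 * R ≤ (α * n) ^ α := hn2
    have hn2' : ((n : ℝ) + 1) ≤ 2 * n := by
      have : (1:ℝ) ≤ n := by exact_mod_cast hn1
      linarith
    nlinarith [mul_le_mul_of_nonneg_left h8R (by linarith : (0:ℝ) ≤ (n:ℝ)),
      mul_pos hR hnpos]
  have expand : 1 / 2 * ((n : ℝ) * R ^ (n-1) / Real.Gamma (α * n + 1)) *
      (Real.Gamma (α * n + 1) * (α * n) ^ α)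
      = (n : ℝ) * (α * n) ^ α * R ^ (n-1) / 2 := by
    field_simp
  rw [expand]
  calc ((n : ℝ) + 1) * (R * R ^ (n-1))
      = (((n : ℝ) + 1) * R) * R ^ (n-1) := by ring
    _ ≤ ((n : ℝ) * (α * n) ^ α / 4) * R ^ (n-1) := by
        apply mul_le_mul_of_nonneg_right _ (le_of_lt hRp)
        linarith
    _ ≤ (n : ℝ) * (α * n) ^ α * R ^ (n-1) / 2 := by
        have : (0:ℝ) ≤ (n : ℝ) * (α * n) ^ α * R ^ (n-1) := by positivity
        nlinarith

/-- Derivative of the Mittag-Leffler function at any point. -/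
lemma hasDerivAt_mittagLeffler (α : ℝ) (hα : 0 < α) (x : ℝ) :
    HasDerivAt (mittagLeffler α)
      (∑' n : ℕ, (n : ℝ) * x ^ (n - 1) / Real.Gamma (α * n + 1)) x := by
  set R := |x| + 1 with hR
  have hR0 : 0 < R := by positivity
  have hu := summable_ml_deriv_bound α hα R hR0
  have key := hasDerivAt_tsum_of_isPreconnected (𝕜 := ℝ) (F := ℝ)
      (u := fun n : ℕ => (n : ℝ) * R ^ (n - 1) / Real.Gamma (α * n + 1))
      (g := fun (n : ℕ) (y : ℝ) => y ^ n / Real.Gamma (α * n + 1))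
      (g' := fun (n : ℕ) (y : ℝ) => (n : ℝ) * y ^ (n - 1) / Real.Gamma (α * n + 1))
      (t := ball (0:ℝ) R) (y₀ := 0) (y := x)
      hu isOpen_ball (convex_ball 0 R).isPreconnected
      (fun n y _ => (hasDerivAt_pow n y).div_const _)
      ?_ (by simpa using hR0) ?_ (by simp [hR])
  · exact key
  · intro n y hy
    have hGn : 0 < Real.Gamma (α * n + 1) := Real.Gamma_pos_of_pos (by positivity)
    have hyR : |y| ≤ R := le_of_lt (by simpa using hy)
    rw [Real.norm_eq_abs, abs_div, abs_of_nonneg (le_of_lt hGn), abs_mul,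
      Nat.abs_cast, abs_pow]
    have hpow : |y| ^ (n - 1) ≤ R ^ (n - 1) := pow_le_pow_left₀ (abs_nonneg y) hyR _
    exact div_le_div₀ (by positivity)
      (mul_le_mul_of_nonneg_left hpow (Nat.cast_nonneg n)) hGn le_rfl
  · apply summable_of_ne_finset_zero (s := {0})
    intro n hn
    simp only [Finset.mem_singleton] at hn
    simp [zero_pow hn]

/-- The key series identity: `α · E_α'(x) = E_{α,α}(x)`. -/
lemma alpha_mul_deriv_series (α : ℝ) (hα : 0 < α) (x : ℝ) :
    α * ∑' n : ℕ, (n : ℝ) * x ^ (n - 1) / Real.Gamma (α * n + 1)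
      = mittagLeffler2 α α x := by
  have hsum : Summable (fun n : ℕ => (n : ℝ) * x ^ (n - 1) / Real.Gamma (α * n + 1)) := by
    apply Summable.of_norm_bounded (summable_ml_deriv_bound α hα (|x| + 1) (by positivity))
    intro n
    have hGn : 0 < Real.Gamma (α * n + 1) := Real.Gamma_pos_of_pos (by positivity)
    rw [Real.norm_eq_abs, abs_div, abs_of_nonneg (le_of_lt hGn), abs_mul,
      Nat.abs_cast, abs_pow]
    have hpow : |x| ^ (n - 1) ≤ (|x| + 1) ^ (n - 1) :=
      pow_le_pow_left₀ (abs_nonneg x) (by linarith) _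
    exact div_le_div₀ (by positivity)
      (mul_le_mul_of_nonneg_left hpow (Nat.cast_nonneg n)) hGn le_rfl
  rw [Summable.tsum_eq_zero_add hsum]
  simp only [Nat.cast_zero, zero_mul, zero_div, zero_add]
  rw [mittagLeffler2, ← tsum_mul_left]
  apply tsum_congr
  intro k
  have hpos : (0:ℝ) < α * k + α := by positivity
  have harg : α * ((k : ℕ) + 1 : ℕ) + 1 = (α * k + α) + 1 := by push_cast; ring
  have hidx : ((k : ℕ) + 1 : ℕ) - 1 = k := rfl
  rw [hidx, harg, Real.Gamma_add_one (ne_of_gt hpos)]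
  have hG : 0 < Real.Gamma (α * k + α) := Real.Gamma_pos_of_pos hpos
  push_cast
  field_simp

/-- Let α > 0 and c > 0 be real and let g : ℝ → ℝ be differentiable at t with
g(t) > 0. Then s ↦ E_α(−c·g(s)^α) is differentiable at t with derivative
−c g'(t) g(t)^(α−1) E_{α,α}(−c g(t)^α). -/
theorem mittagLeffler_comp_hasDerivAt (α c : ℝ) (hα : 0 < α) (hc : 0 < c)
    (g : ℝ → ℝ) (g' t : ℝ) (hg : HasDerivAt g g' t) (hgt : 0 < g t) :
    HasDerivAt (fun s => mittagLeffler α (-c * g s ^ α))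
      (-c * g' * g t ^ (α - 1) * mittagLeffler2 α α (-c * g t ^ α)) t := by
  set x₀ := -c * g t ^ α with hx₀
  set D := ∑' n : ℕ, (n : ℝ) * x₀ ^ (n - 1) / Real.Gamma (α * n + 1) with hD
  have houter : HasDerivAt (mittagLeffler α) D x₀ := hasDerivAt_mittagLeffler α hα x₀
  have hinner : HasDerivAt (fun s => -c * g s ^ α) (-c * (g' * α * g t ^ (α - 1))) t := by
    exact (hg.rpow_const (Or.inl (ne_of_gt hgt))).const_mul (-c)
  have hcomp := houter.comp t hinner
  refine hcomp.congr_deriv ?_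
  have hid := alpha_mul_deriv_series α hα x₀
  rw [← hid, hD]
  ring
end

section
/- Let 0 < α < 1, λ > 0, D > 0 be real numbers, and let g : [0, ∞) → ℝ be continuous on [0, t], differentiable on (0, t), with g(0) = 0 and g'(s) > 0 for 0 < s < t. Then the function T(τ) := E_α(−λ D g(τ)^α) satisfies the g-fractional relaxation equation at t: (1/Γ(1−α)) ∫_0^t (g(t) − g(τ))^{−α} T'(τ) dτ = −λ D E_α(−λ D g(t)^α). -/
open MeasureTheory

lemma gamma_interp {α y : ℝ} (hα : 0 < α) (hα1 : α < 1) (hy : 0 < y) (hy' : 0 < y + α - 1) :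
    Real.Gamma y * (y + α - 1) ^ α ≤ Real.Gamma (y + α) := by
  have h1 : (0:ℝ) < y + α - 1 := hy'
  have h2 : (0:ℝ) < y + α := by linarith
  have hconv := Real.convexOn_log_Gamma
  have key := hconv.2 (Set.mem_Ioi.2 h1) (Set.mem_Ioi.2 h2)
    (le_of_lt hα) (by linarith : (0:ℝ) ≤ 1 - α) (by ring)
  have hcomb : α • (y + α - 1) + (1 - α) • (y + α) = y := by
    simp only [smul_eq_mul]; ring
  rw [hcomb] at key
  simp only [Function.comp_apply, smul_eq_mul] at key
  -- key : log (Γ y) ≤ α * log (Γ (y+α-1)) + (1-α) * log (Γ (y+α))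
  have hGadd : Real.Gamma (y + α) = (y + α - 1) * Real.Gamma (y + α - 1) := by
    have := Real.Gamma_add_one (ne_of_gt h1)
    rw [show y + α - 1 + 1 = y + α by ring] at this
    rw [this]
  have hGpos1 : 0 < Real.Gamma (y + α - 1) := Real.Gamma_pos_of_pos h1
  have hGpos2 : 0 < Real.Gamma (y + α) := Real.Gamma_pos_of_pos h2
  have hGposy : 0 < Real.Gamma y := Real.Gamma_pos_of_pos hy
  have hlog1 : Real.log (Real.Gamma (y + α - 1)) =
      Real.log (Real.Gamma (y + α)) - Real.log (y + α - 1) := by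
    rw [hGadd, Real.log_mul (ne_of_gt h1) (ne_of_gt hGpos1)]; ring
  rw [hlog1] at key
  have key2 : Real.log (Real.Gamma y) + α * Real.log (y + α - 1)
      ≤ Real.log (Real.Gamma (y + α)) := by nlinarith [key]
  have := Real.exp_le_exp.2 key2
  rwa [Real.exp_add, Real.exp_log hGposy, mul_comm α (Real.log (y + α - 1)), ← Real.rpow_def_of_pos h1,
    Real.exp_log hGpos2] at this

lemma summable_aux {α : ℝ} (hα : 0 < α) (hα1 : α < 1) {R : ℝ} (hR : 0 ≤ R) :
    Summable (fun k : ℕ => (k + 1 : ℝ) * R ^ k / Real.Gamma (α * k + 1)) := by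
  have hR1 : (0:ℝ) < R + 1 := by linarith
  have main : Summable (fun k : ℕ => (k + 1 : ℝ) * (R+1) ^ k / Real.Gamma (α * k + 1)) := by
    apply summable_of_ratio_norm_eventually_le (r := 1/2) (by norm_num)
    have htend : Filter.Tendsto (fun k : ℕ => α * k + α) Filter.atTop Filter.atTop := by
      apply Filter.tendsto_atTop_add_const_right
      exact Filter.Tendsto.const_mul_atTop hα tendsto_natCast_atTop_atTop
    have hev : ∀ᶠ (k : ℕ) in Filter.atTop,
        max 1 ((4*(R+1)) ^ (1/α)) ≤ α * k + α := htend.eventually_ge_atTop _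
    filter_upwards [hev] with k hk
    have hβ : (0:ℝ) < α * k + α := lt_of_lt_of_le (by positivity) (le_trans (le_max_left _ _) hk)
    have hG1 : 0 < Real.Gamma (α * k + 1) := Real.Gamma_pos_of_pos (by positivity)
    have hG2 : 0 < Real.Gamma (α * ((k:ℝ)+1) + 1) := Real.Gamma_pos_of_pos (by positivity)
    -- Gamma growth
    have hkey : Real.Gamma (α * k + 1) * (α * k + α) ^ α ≤ Real.Gamma (α * ((k:ℝ)+1) + 1) := by
      have h := gamma_interp hα hα1 (y := α * k + 1) (by positivity) (by linarith)
      rw [show α * (k:ℝ) + 1 + α - 1 = α * k + α from by ring,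
        show α * (k:ℝ) + 1 + α = α * ((k:ℝ)+1) + 1 from by ring] at h
      exact h
    -- the rpow bound
    have hp : (4*(R+1)) ≤ (α * k + α) ^ α := by
      have h4 : (0:ℝ) ≤ 4*(R+1) := by positivity
      have h5 : ((4*(R+1)) ^ (1/α)) ^ α ≤ (α * k + α) ^ α :=
        Real.rpow_le_rpow (Real.rpow_nonneg h4 _)
          (le_trans (le_max_right _ _) hk) (le_of_lt hα)
      rwa [one_div, Real.rpow_inv_rpow h4 (ne_of_gt hα)] at h5
    rw [Real.norm_of_nonneg (by positivity), Real.norm_of_nonneg (by positivity)]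
    push_cast
    rw [← mul_div_assoc, div_le_div_iff₀ hG2 hG1]
    calc ((k:ℝ)+1+1)*(R+1)^(k+1) * Real.Gamma (α * k + 1)
        ≤ (2*((k:ℝ)+1)) * ((R+1)^k) * ((R+1) * Real.Gamma (α * k + 1)) := by
          rw [pow_succ]
          have h0 : (0:ℝ) ≤ (R+1)^k * ((R+1) * Real.Gamma (α * k + 1)) := by positivity
          nlinarith [mul_le_mul_of_nonneg_right
            (show ((k:ℝ)+1+1) ≤ 2*((k:ℝ)+1) from by linarith) h0]
      _ ≤ 1/2 * (((k:ℝ)+1) * (R+1)^k) * (Real.Gamma (α * k + 1) * (α * k + α) ^ α) := by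
          have h6 : 4 * ((R+1) * Real.Gamma (α * k + 1))
              ≤ Real.Gamma (α * k + 1) * (α * k + α) ^ α := by nlinarith [hG1, hp]
          nlinarith [pow_nonneg (le_of_lt hR1) k, hG1,
            mul_le_mul_of_nonneg_left h6 (by positivity : (0:ℝ) ≤ ((k:ℝ)+1)/8 * (R+1)^k)]
      _ ≤ 1/2 * (((k:ℝ)+1) * (R+1)^k) * Real.Gamma (α * ((k:ℝ)+1) + 1) :=
          mul_le_mul_of_nonneg_left hkey (by positivity)
  apply main.of_nonneg_of_le (fun k => by positivity)
  intro k
  gcongr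
  all_goals linarith

lemma gammaML_pos {α : ℝ} (hα : 0 < α) (k : ℕ) : 0 < Real.Gamma (α * k + 1) :=
  Real.Gamma_pos_of_pos (by positivity)

lemma summable_ML {α : ℝ} (hα : 0 < α) (hα1 : α < 1) (x : ℝ) :
    Summable (fun k : ℕ => x ^ k / Real.Gamma (α * k + 1)) := by
  apply Summable.of_norm_bounded (summable_aux hα hα1 (abs_nonneg x))
  intro k
  rw [norm_div, Real.norm_of_nonneg (le_of_lt (gammaML_pos hα k)), norm_pow]
  refine (div_le_div_iff_of_pos_right (gammaML_pos hα k)).2 ?_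
  exact le_mul_of_one_le_left (by positivity) (by push_cast; linarith [Nat.cast_nonneg (α := ℝ) k])

lemma summable_ML_deriv {α : ℝ} (hα : 0 < α) (hα1 : α < 1) (x : ℝ) :
    Summable (fun k : ℕ => (k : ℝ) * x ^ (k - 1) / Real.Gamma (α * k + 1)) := by
  apply Summable.of_norm_bounded (summable_aux hα hα1 (by positivity : (0:ℝ) ≤ |x| + 1))
  intro k
  rw [norm_div, Real.norm_of_nonneg (le_of_lt (gammaML_pos hα k)), norm_mul, norm_pow]
  refine (div_le_div_iff_of_pos_right (gammaML_pos hα k)).2 ?_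
  have h1 : |x| ^ (k-1) ≤ (|x| + 1) ^ k :=
    le_trans (pow_le_pow_left₀ (abs_nonneg x) (by linarith) _)
      (pow_le_pow_right₀ (by linarith [abs_nonneg x]) (Nat.sub_le k 1))
  have hk : ‖(k:ℝ)‖ = (k:ℝ) := Real.norm_natCast k
  rw [hk]
  exact mul_le_mul (by linarith [Nat.cast_nonneg (α := ℝ) k]) h1 (by positivity)
    (by positivity)

lemma hasDerivAt_ML {α : ℝ} (hα : 0 < α) (hα1 : α < 1) (x : ℝ) :
    HasDerivAt (mittagLeffler α)
      (∑' k : ℕ, (k : ℝ) * x ^ (k - 1) / Real.Gamma (α * k + 1)) x := by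
  have hRpos : (0:ℝ) < |x| + 1 := by positivity
  have := hasDerivAt_tsum_of_isPreconnected
    (u := fun k : ℕ => (k + 1 : ℝ) * (|x| + 1) ^ k / Real.Gamma (α * k + 1))
    (g := fun (k : ℕ) (y : ℝ) => y ^ k / Real.Gamma (α * k + 1))
    (g' := fun (k : ℕ) (y : ℝ) => (k : ℝ) * y ^ (k - 1) / Real.Gamma (α * k + 1)) (y := x)
    (summable_aux hα hα1 (by positivity))
    (Metric.isOpen_ball (x := (0:ℝ)) (ε := |x| + 1))
    ((convex_ball (0:ℝ) (|x|+1)).isPreconnected)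
    (fun k y _ => (hasDerivAt_pow k y).div_const _)
    ?_ (Metric.mem_ball_self hRpos) ?_ ?_
  · exact this
  · intro k y hy
    rw [norm_div, Real.norm_of_nonneg (le_of_lt (gammaML_pos hα k)), norm_mul, norm_pow,
      Real.norm_natCast]
    refine (div_le_div_iff_of_pos_right (gammaML_pos hα k)).2 ?_
    have hylt : |y| < |x| + 1 := by simpa [Real.dist_eq] using hy
    have h1 : |y| ^ (k-1) ≤ (|x| + 1) ^ k :=
      le_trans (pow_le_pow_left₀ (abs_nonneg y) (le_of_lt hylt) _)
        (pow_le_pow_right₀ (by linarith [abs_nonneg x]) (Nat.sub_le k 1))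
    exact mul_le_mul (by linarith [Nat.cast_nonneg (α := ℝ) k]) h1 (by positivity)
      (by positivity)
  · exact summable_ML hα hα1 0
  · simpa [Real.dist_eq] using lt_of_le_of_lt (le_abs_self x) (by linarith [abs_nonneg x])

noncomputable def mlDeriv (α c u : ℝ) : ℝ :=
  ∑' k : ℕ, (-c) ^ (k+1) * (α * (k+1)) * u ^ (α * (k+1) - 1) / Real.Gamma (α * (k+1) + 1)

lemma hasDerivAt_ML_comp {α : ℝ} (hα : 0 < α) (hα1 : α < 1) (c : ℝ) {u : ℝ} (hu : 0 < u) :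
    HasDerivAt (fun v : ℝ => mittagLeffler α (-c * v ^ α)) (mlDeriv α c u) u := by
  have hinner : HasDerivAt (fun v : ℝ => -c * v ^ α) (-c * (α * u ^ (α - 1))) u :=
    (Real.hasDerivAt_rpow_const (Or.inl (ne_of_gt hu))).const_mul (-c)
  have houter := hasDerivAt_ML hα hα1 (-c * u ^ α)
  have hcomp := houter.comp u hinner
  convert hcomp using 1
  case e'_4 => rfl
  case e'_5 => rfl
  case e'_8 => rfl
  -- mlDeriv α c u = (∑' k, k * (-c*u^α)^(k-1)/Γ(αk+1)) * (-c * (α * u^(α-1)))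
  set S : ℕ → ℝ := fun k => (k : ℝ) * (-c * u ^ α) ^ (k - 1) / Real.Gamma (α * k + 1) with hS
  have hsum : Summable S := summable_ML_deriv hα hα1 _
  have hzero : (∑' k, S k) = ∑' k, S (k + 1) := by
    rw [Summable.tsum_eq_zero_add hsum]
    simp [hS]
  rw [hzero, ← tsum_mul_right]
  apply tsum_congr
  intro k
  have hk1 : ((k:ℕ) + 1 - 1 : ℕ) = k := rfl
  simp only [hS, hk1]
  have hpow : (-c * u ^ α) ^ k = (-c) ^ k * u ^ (α * k) := by
    rw [mul_pow, ← Real.rpow_natCast (u ^ α) k, ← Real.rpow_mul (le_of_lt hu)]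
  have hru : u ^ (α * (k+1) - 1) = u ^ (α * k) * u ^ (α - 1) := by
    rw [← Real.rpow_add hu]
    congr 1
    push_cast
    ring
  push_cast
  rw [hpow, hru]
  ring

lemma real_beta {a b : ℝ} (ha : 0 < a) (hb : 0 < b) :
    ∫ x in (0:ℝ)..1, x ^ (a - 1) * (1 - x) ^ (b - 1) =
      Real.Gamma a * Real.Gamma b / Real.Gamma (a + b) := by
  have h := Complex.Gamma_mul_Gamma_eq_betaIntegral (s := (a:ℂ)) (t := (b:ℂ))
    (by simpa using ha) (by simpa using hb)
  have hbeta : Complex.betaIntegral (a:ℂ) (b:ℂ) =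
      ((∫ x in (0:ℝ)..1, x ^ (a - 1) * (1 - x) ^ (b - 1) : ℝ) : ℂ) := by
    rw [Complex.betaIntegral]
    rw [← intervalIntegral.integral_ofReal]
    apply intervalIntegral.integral_congr
    intro x hx
    rw [Set.uIcc_of_le (by norm_num : (0:ℝ) ≤ 1)] at hx
    obtain ⟨hx0, hx1⟩ := hx
    beta_reduce
    rw [show ((a:ℂ) - 1) = ((a - 1 : ℝ) : ℂ) from by push_cast; ring,
      show ((b:ℂ) - 1) = ((b - 1 : ℝ) : ℂ) from by push_cast; ring,
      show (1 - (x:ℂ)) = ((1 - x : ℝ) : ℂ) from by push_cast; ring,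
      ← Complex.ofReal_cpow hx0, ← Complex.ofReal_cpow (by linarith), ← Complex.ofReal_mul]
  rw [hbeta, ← Complex.ofReal_add, Complex.Gamma_ofReal, Complex.Gamma_ofReal,
    Complex.Gamma_ofReal] at h
  have h2 : (Real.Gamma a * Real.Gamma b : ℝ) =
      Real.Gamma (a + b) * ∫ x in (0:ℝ)..1, x ^ (a - 1) * (1 - x) ^ (b - 1) := by
    exact_mod_cast h
  have hG : Real.Gamma (a + b) ≠ 0 := ne_of_gt (Real.Gamma_pos_of_pos (by linarith))
  field_simp [hG] at h2 ⊢
  linarith [h2]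

lemma real_beta_integrable {a b : ℝ} (ha : 0 < a) (hb : 0 < b) :
    IntervalIntegrable (fun x : ℝ => x ^ (a - 1) * (1 - x) ^ (b - 1)) volume 0 1 := by
  have h := Complex.betaIntegral_convergent (u := (a:ℂ)) (v := (b:ℂ))
    (by simpa using ha) (by simpa using hb)
  have h2 : IntervalIntegrable
      (fun x : ℝ => ((x:ℂ) ^ ((a:ℂ) - 1) * (1 - (x:ℂ)) ^ ((b:ℂ) - 1)).re) volume 0 1 := by
    rw [intervalIntegrable_iff] at h ⊢
    exact (Complex.reCLM.integrable_comp h)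
  apply h2.congr_ae
  rw [Filter.EventuallyEq, ae_restrict_iff' measurableSet_uIoc]
  apply Filter.Eventually.of_forall
  intro x hx
  rw [Set.uIoc_of_le (by norm_num : (0:ℝ) ≤ 1)] at hx
  obtain ⟨hx0, hx1⟩ := hx
  rw [show ((a:ℂ) - 1) = ((a - 1 : ℝ) : ℂ) from by push_cast; ring,
    show ((b:ℂ) - 1) = ((b - 1 : ℝ) : ℂ) from by push_cast; ring,
    show (1 - (x:ℂ)) = ((1 - x : ℝ) : ℂ) from by push_cast; ring,
    ← Complex.ofReal_cpow (le_of_lt hx0), ← Complex.ofReal_cpow (by linarith),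
    ← Complex.ofReal_mul, Complex.ofReal_re]

lemma beta_scaled_eq {α β G : ℝ} (hα : 0 < α) (hα1 : α < 1) (hβ : 0 < β) (hG : 0 < G) :
    ∀ x ∈ Set.uIcc (0:ℝ) 1,
      (G - G * x) ^ (-α) * (G * x) ^ (β - 1) =
      G ^ (-α) * G ^ (β - 1) * (x ^ (β - 1) * (1 - x) ^ (-α)) := by
  intro x hx
  rw [Set.uIcc_of_le (by norm_num : (0:ℝ) ≤ 1)] at hx
  obtain ⟨hx0, hx1⟩ := hx
  rw [show G - G * x = G * (1 - x) from by ring,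
    Real.mul_rpow (le_of_lt hG) (by linarith), Real.mul_rpow (le_of_lt hG) hx0]
  ring

lemma beta_scaled_integrable {α β G : ℝ} (hα : 0 < α) (hα1 : α < 1) (hβ : 0 < β) (hG : 0 < G) :
    IntegrableOn (fun u : ℝ => (G - u) ^ (-α) * u ^ (β - 1)) (Set.Ioo 0 G) volume := by
  set h : ℝ → ℝ := fun u => (G - u) ^ (-α) * u ^ (β - 1) with hh
  have hf : IntervalIntegrable (fun x : ℝ => x ^ (β - 1) * (1 - x) ^ (-α)) volume 0 1 := by
    have := real_beta_integrable hβ (by linarith : (0:ℝ) < 1 - α)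
    rw [show (1 - α) - 1 = -α from by ring] at this
    exact this
  have h2 : IntervalIntegrable (fun x : ℝ => h (G * x)) volume 0 1 := by
    apply ((hf.const_mul (G ^ (-α) * G ^ (β - 1))).congr_ae)
    rw [Filter.EventuallyEq, ae_restrict_iff' measurableSet_uIoc]
    apply Filter.Eventually.of_forall
    intro x hx
    have hx' : x ∈ Set.uIcc (0:ℝ) 1 := Set.uIoc_subset_uIcc hx
    rw [hh]
    beta_reduce
    rw [beta_scaled_eq hα hα1 hβ hG x hx']
  have h3 : IntervalIntegrable (fun x => h (G * x)) volume (0 / G) (G / G) := by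
    rw [zero_div, div_self (ne_of_gt hG)]; exact h2
  have h4 : IntervalIntegrable h volume 0 G :=
    (IntervalIntegrable.comp_mul_left_iff (ne_of_gt hG)).1 h3
  exact ((intervalIntegrable_iff_integrableOn_Ioc_of_le (le_of_lt hG)).1 h4).mono_set
    Set.Ioo_subset_Ioc_self

lemma beta_scaled_value {α β G : ℝ} (hα : 0 < α) (hα1 : α < 1) (hβ : 0 < β) (hG : 0 < G) :
    ∫ u in Set.Ioo 0 G, (G - u) ^ (-α) * u ^ (β - 1) =
      G ^ (β - α) * (Real.Gamma β * Real.Gamma (1 - α) / Real.Gamma (β + 1 - α)) := by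
  set h : ℝ → ℝ := fun u => (G - u) ^ (-α) * u ^ (β - 1) with hh
  have step1 : ∫ u in Set.Ioo 0 G, h u = ∫ u in (0:ℝ)..G, h u := by
    rw [intervalIntegral.integral_of_le (le_of_lt hG), integral_Ioc_eq_integral_Ioo]
  have step2 : (∫ u in (0:ℝ)..G, h u) = G • ∫ x in (0:ℝ)..1, h (G * x) := by
    rw [intervalIntegral.smul_integral_comp_mul_left h G, mul_zero, mul_one]
  have step3 : (∫ x in (0:ℝ)..1, h (G * x)) =
      G ^ (-α) * G ^ (β - 1) * ∫ x in (0:ℝ)..1, x ^ (β - 1) * (1 - x) ^ (-α) := by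
    rw [← intervalIntegral.integral_const_mul]
    apply intervalIntegral.integral_congr
    intro x hx
    rw [hh]
    beta_reduce
    rw [beta_scaled_eq hα hα1 hβ hG x hx]
  have step4 : (∫ x in (0:ℝ)..1, x ^ (β - 1) * (1 - x) ^ (-α)) =
      Real.Gamma β * Real.Gamma (1 - α) / Real.Gamma (β + 1 - α) := by
    have := real_beta hβ (by linarith : (0:ℝ) < 1 - α)
    rw [show (1 - α) - 1 = -α from by ring, show β + (1 - α) = β + 1 - α from by ring] at this
    exact this
  have hGpow : G ^ (β - α) = G * (G ^ (-α) * G ^ (β - 1)) := by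
    rw [show β - α = 1 + -α + (β - 1) from by ring, Real.rpow_add hG, Real.rpow_add hG,
      Real.rpow_one]
    ring
  rw [step1, step2, step3, step4, hGpow, smul_eq_mul]
  ring

lemma core_integral {α c G : ℝ} (hα : 0 < α) (hα1 : α < 1) (hc : 0 < c) (hG : 0 < G) :
    ∫ u in Set.Ioo 0 G, (G - u) ^ (-α) * mlDeriv α c u =
      Real.Gamma (1 - α) * (-c * mittagLeffler α (-c * G ^ α)) := by
  set F : ℕ → ℝ → ℝ := fun k u =>
    ((-c) ^ (k+1) * (α * ((k:ℝ)+1)) / Real.Gamma (α * ((k:ℝ)+1) + 1)) *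
      ((G - u) ^ (-α) * u ^ (α * ((k:ℝ)+1) - 1)) with hF
  have hβpos : ∀ k : ℕ, (0:ℝ) < α * ((k:ℝ)+1) := fun k => by positivity
  have hβG : ∀ k : ℕ, 0 < Real.Gamma (α * ((k:ℝ)+1) + 1) :=
    fun k => Real.Gamma_pos_of_pos (by positivity)
  have hGpowk : ∀ k : ℕ, (G ^ α) ^ k = G ^ (α * k) := by
    intro k
    rw [← Real.rpow_natCast (G ^ α) k, ← Real.rpow_mul (le_of_lt hG)]
  -- pointwise identity
  have hpt : ∀ u : ℝ, (G - u) ^ (-α) * mlDeriv α c u = ∑' k, F k u := by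
    intro u
    rw [mlDeriv, ← tsum_mul_left]
    apply tsum_congr
    intro k
    rw [hF]
    push_cast
    ring
  -- integrability of each term
  have hint : ∀ k : ℕ, IntegrableOn (F k) (Set.Ioo 0 G) volume := by
    intro k
    exact (beta_scaled_integrable hα hα1 (hβpos k) hG).const_mul _
  -- value of each integral
  have hval : ∀ k : ℕ, ∫ u in Set.Ioo 0 G, F k u =
      Real.Gamma (1 - α) * ((-c) * ((-c * G ^ α) ^ k / Real.Gamma (α * k + 1))) := by
    intro k
    rw [hF]
    simp only
    rw [integral_const_mul, beta_scaled_value hα hα1 (hβpos k) hG]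
    have e1 : α * ((k:ℝ)+1) - α = α * k := by ring
    have e2 : α * ((k:ℝ)+1) + 1 - α = α * k + 1 := by ring
    rw [e1, e2]
    have hGadd : Real.Gamma (α * ((k:ℝ)+1) + 1) =
        (α * ((k:ℝ)+1)) * Real.Gamma (α * ((k:ℝ)+1)) := by
      have := Real.Gamma_add_one (ne_of_gt (hβpos k))
      rw [this]
    have hΓβ : 0 < Real.Gamma (α * ((k:ℝ)+1)) := Real.Gamma_pos_of_pos (hβpos k)
    rw [hGadd]
    have hml : (-c * G ^ α) ^ k = (-c) ^ k * G ^ (α * k) := by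
      rw [mul_pow, hGpowk]
    rw [hml]
    have hΓk : Real.Gamma (α * (k:ℝ) + 1) ≠ 0 := ne_of_gt (gammaML_pos hα k)
    field_simp
    ring
  -- norms of integrals, for summability
  have hnorm : ∀ k : ℕ, (∫ u in Set.Ioo 0 G, ‖F k u‖) =
      (c * Real.Gamma (1 - α)) * ((c * G ^ α) ^ k / Real.Gamma (α * k + 1)) := by
    intro k
    have congr1 : ∀ u ∈ Set.Ioo (0:ℝ) G, ‖F k u‖ =
        (c ^ (k+1) * (α * ((k:ℝ)+1)) / Real.Gamma (α * ((k:ℝ)+1) + 1)) *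
          ((G - u) ^ (-α) * u ^ (α * ((k:ℝ)+1) - 1)) := by
      intro u hu
      obtain ⟨hu0, huG⟩ := hu
      rw [hF]
      simp only
      rw [norm_mul, norm_mul, norm_div, norm_mul]
      rw [Real.norm_of_nonneg (Real.rpow_nonneg (by linarith : (0:ℝ) ≤ G - u) _),
        Real.norm_of_nonneg (Real.rpow_nonneg (le_of_lt hu0) _),
        Real.norm_of_nonneg (le_of_lt (hβG k)), Real.norm_of_nonneg (le_of_lt (hβpos k)),
        norm_pow, norm_neg, Real.norm_of_nonneg (le_of_lt hc)]
    rw [setIntegral_congr_fun measurableSet_Ioo congr1, integral_const_mul,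
      beta_scaled_value hα hα1 (hβpos k) hG]
    have e1 : α * ((k:ℝ)+1) - α = α * k := by ring
    have e2 : α * ((k:ℝ)+1) + 1 - α = α * k + 1 := by ring
    rw [e1, e2]
    have hGadd : Real.Gamma (α * ((k:ℝ)+1) + 1) =
        (α * ((k:ℝ)+1)) * Real.Gamma (α * ((k:ℝ)+1)) := Real.Gamma_add_one (ne_of_gt (hβpos k))
    have hΓβ : 0 < Real.Gamma (α * ((k:ℝ)+1)) := Real.Gamma_pos_of_pos (hβpos k)
    rw [hGadd]
    have hml : (c * G ^ α) ^ k = c ^ k * G ^ (α * k) := by rw [mul_pow, hGpowk]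
    rw [hml]
    have hΓk : Real.Gamma (α * (k:ℝ) + 1) ≠ 0 := ne_of_gt (gammaML_pos hα k)
    field_simp
    ring
  have hsummable : Summable (fun k : ℕ => ∫ u in Set.Ioo 0 G, ‖F k u‖) := by
    rw [show (fun k : ℕ => ∫ u in Set.Ioo 0 G, ‖F k u‖) =
      (fun k : ℕ => (c * Real.Gamma (1 - α)) * ((c * G ^ α) ^ k / Real.Gamma (α * k + 1)))
      from funext hnorm]
    exact (summable_ML hα hα1 (c * G ^ α)).mul_left _
  have hmain := MeasureTheory.integral_tsum_of_summable_integral_norm hint hsummable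
  calc ∫ u in Set.Ioo 0 G, (G - u) ^ (-α) * mlDeriv α c u
      = ∫ u in Set.Ioo 0 G, ∑' k, F k u := by
        apply integral_congr_ae; exact Filter.Eventually.of_forall (fun u => hpt u)
    _ = ∑' k, ∫ u in Set.Ioo 0 G, F k u := hmain.symm
    _ = ∑' k : ℕ, Real.Gamma (1 - α) * ((-c) * ((-c * G ^ α) ^ k / Real.Gamma (α * k + 1))) :=
        tsum_congr hval
    _ = Real.Gamma (1 - α) * (-c * mittagLeffler α (-c * G ^ α)) := by
        rw [tsum_mul_left, tsum_mul_left, mittagLeffler]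

/-- Let 0 < α < 1, λ > 0, D > 0, g continuous on [0,t], differentiable on
(0,t), g(0) = 0, g' > 0 on (0,t). Then T(τ) := E_α(−λ D g(τ)^α) satisfies the
g-fractional relaxation equation at t:
(1/Γ(1−α)) ∫_0^t (g(t) − g(τ))^{−α} T'(τ) dτ = −λ D E_α(−λ D g(t)^α). -/
theorem g_fractional_relaxation (α t lam D : ℝ) (hα : 0 < α) (hα1 : α < 1)
    (hlam : 0 < lam) (hD : 0 < D) (ht : 0 < t) (g g' : ℝ → ℝ)
    (hgc : ContinuousOn g (Set.Icc 0 t))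
    (hgd : ∀ s ∈ Set.Ioo 0 t, HasDerivAt g (g' s) s)
    (hg0 : g 0 = 0)
    (hg' : ∀ s ∈ Set.Ioo 0 t, 0 < g' s) :
    (1 / Real.Gamma (1 - α)) *
        ∫ τ in Set.Ioo 0 t,
          (g t - g τ) ^ (-α) *
            deriv (fun τ => mittagLeffler α (-(lam * D) * g τ ^ α)) τ =
      -(lam * D) * mittagLeffler α (-(lam * D) * g t ^ α) := by
  set c : ℝ := lam * D with hc_def
  have hc : 0 < c := mul_pos hlam hD
  have hmono : StrictMonoOn g (Set.Icc 0 t) := by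
    apply strictMonoOn_of_deriv_pos (convex_Icc 0 t) hgc
    intro x hx
    rw [interior_Icc] at hx
    rw [(hgd x hx).deriv]
    exact hg' x hx
  have hmem0 : (0:ℝ) ∈ Set.Icc (0:ℝ) t := ⟨le_refl _, le_of_lt ht⟩
  have hmemt : t ∈ Set.Icc (0:ℝ) t := ⟨le_of_lt ht, le_refl _⟩
  have hG : 0 < g t := by
    have := hmono hmem0 hmemt ht
    rwa [hg0] at this
  have hgpos : ∀ τ ∈ Set.Ioo 0 t, 0 < g τ := by
    intro τ hτ
    have := hmono hmem0 (Set.mem_Icc.2 ⟨le_of_lt hτ.1, le_of_lt hτ.2⟩) hτ.1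
    rwa [hg0] at this
  have hglt : ∀ τ ∈ Set.Ioo 0 t, g τ < g t := fun τ hτ =>
    hmono (Set.mem_Icc.2 ⟨le_of_lt hτ.1, le_of_lt hτ.2⟩) hmemt hτ.2
  have himg : g '' Set.Ioo 0 t = Set.Ioo 0 (g t) := by
    apply Set.Subset.antisymm
    · rintro _ ⟨x, hx, rfl⟩
      exact ⟨hgpos x hx, hglt x hx⟩
    · have h2 := intermediate_value_Ioo (le_of_lt ht) hgc
      rwa [hg0] at h2
  set h : ℝ → ℝ := fun u => (g t - u) ^ (-α) * mlDeriv α c u with hh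
  have hrw : ∀ τ ∈ Set.Ioo 0 t,
      (g t - g τ) ^ (-α) * deriv (fun τ => mittagLeffler α (-c * g τ ^ α)) τ
        = |g' τ| • h (g τ) := by
    intro τ hτ
    have hderiv : HasDerivAt (fun τ => mittagLeffler α (-c * g τ ^ α))
        (mlDeriv α c (g τ) * g' τ) τ :=
      (hasDerivAt_ML_comp hα hα1 c (hgpos τ hτ)).comp τ (hgd τ hτ)
    rw [hderiv.deriv, hh]
    simp only [smul_eq_mul]
    rw [abs_of_pos (hg' τ hτ)]
    ring
  rw [setIntegral_congr_fun measurableSet_Ioo hrw]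
  have hsub := integral_image_eq_integral_abs_deriv_smul measurableSet_Ioo
    (fun x hx => (hgd x hx).hasDerivWithinAt) ((hmono.injOn).mono Set.Ioo_subset_Icc_self) h
  rw [← hsub, himg, core_integral hα hα1 hc hG]
  have hΓ : Real.Gamma (1 - α) ≠ 0 := ne_of_gt (Real.Gamma_pos_of_pos (by linarith))
  field_simp
end
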